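/- Define Φ : [0,T] × L²([0,T]; ℝ^m) → ℝ^m by Φ(t, f) := f̄(t), where f̄ is the precise representative of f. Then: (i) Φ is jointly Borel measurable with respect to the product of the Borel σ-algebra of [0,T] and the Borel σ-algebra of the norm topology of L²([0,T]; ℝ^m); and (ii) for every f ∈ L²([0,T]; ℝ^m) and every Borel representative g of f, one has Φ(t, f) = g(t) for Lebesgue-a.e. t ∈ [0,T]. -/

import Mathlib

/-!
STATEMENT 1: Φ(t, f) := f̄(t), the precise representative of f evaluated at t, is
(i) jointly Borel measurable on [0,T] × L²([0,T]; ℝ^m), and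
(ii) for every Borel representative g of f, Φ(t, f) = g(t) for Lebesgue-a.e. t ∈ [0,T].
-/

open MeasureTheory Set Filter Topology
open scoped ENNReal NNReal

/-- `avg μ f ε t = ε⁻¹ ∫_{max(t−ε,0)}^{t} f(s) dμ(s)`. -/
noncomputable def avg {ι : Type*} [Fintype ι] (μ : Measure ℝ)
    (f : ℝ → EuclideanSpace ℝ ι) (ε t : ℝ) : EuclideanSpace ℝ ι :=
  ε⁻¹ • ∫ s in Set.Ioc (max (t - ε) 0) t, f s ∂μ

/-- The componentwise liminf (in the extended reals) of the averages as ε ↓ 0. -/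
noncomputable def hatComp {ι : Type*} [Fintype ι] (μ : Measure ℝ)
    (f : ℝ → EuclideanSpace ℝ ι) (t : ℝ) (i : ι) : EReal :=
  liminf (fun ε : ℝ => ((avg μ f ε t i : ℝ) : EReal)) (nhdsWithin 0 (Set.Ioi 0))

open scoped Classical in
/-- The precise representative: equal to the componentwise liminf of averages when all the
components are finite, and `0` otherwise. -/
noncomputable def precise {ι : Type*} [Fintype ι] (μ : Measure ℝ)
    (f : ℝ → EuclideanSpace ℝ ι) (t : ℝ) : EuclideanSpace ℝ ι :=
  if ∀ i, hatComp μ f t i ≠ ⊤ ∧ hatComp μ f t i ≠ ⊥ then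
    (WithLp.equiv 2 (ι → ℝ)).symm fun i => (hatComp μ f t i).toReal
  else 0

/-- `L²` spaces carry the Borel σ-algebra of their norm topology. -/
noncomputable instance {α : Type*} [MeasurableSpace α] {μ : Measure α}
    {E : Type*} [NormedAddCommGroup E] {p : ENNReal} [Fact (1 ≤ p)] :
    MeasurableSpace (Lp E p μ) := borel _

instance {α : Type*} [MeasurableSpace α] {μ : Measure α}
    {E : Type*} [NormedAddCommGroup E] {p : ENNReal} [Fact (1 ≤ p)] :
    BorelSpace (Lp E p μ) := ⟨rfl⟩

/-- `Φ(t, f) = f̄(t)`: the precise representative of `f` evaluated at `t`. -/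
noncomputable def Phi (T : ℝ) (m : ℕ) (t : ℝ)
    (f : Lp (EuclideanSpace ℝ (Fin m)) 2 (volume.restrict (Set.Icc (0:ℝ) T))) :
    EuclideanSpace ℝ (Fin m) :=
  precise (volume.restrict (Set.Icc (0:ℝ) T)) (⇑f) t

section AuxStmt1
variable {ι : Type*} [Fintype ι]

lemma myIntegrable (μ : Measure ℝ) [IsFiniteMeasure μ]
    (f : Lp (EuclideanSpace ℝ ι) 2 μ) : Integrable (⇑f) μ :=
  (Lp.memLp f).integrable (by norm_num)

lemma integral_norm_le_L2 (μ : Measure ℝ) [IsFiniteMeasure μ]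
    (f : Lp (EuclideanSpace ℝ ι) 2 μ) :
    ∫ s, ‖f s‖ ∂μ ≤ ((μ univ) ^ (2:ℝ)⁻¹).toReal * ‖f‖ := by
  have h1 : eLpNorm (⇑f) 1 μ ≤ eLpNorm (⇑f) 2 μ * (μ univ) ^ ((2:ℝ)⁻¹) := by
    have := eLpNorm_le_eLpNorm_mul_rpow_measure_univ (μ := μ)
      (by norm_num : (1:ℝ≥0∞) ≤ 2) (Lp.aestronglyMeasurable f)
    norm_num at this
    convert this using 2
    norm_num
  have h2 : ∫ s, ‖f s‖ ∂μ = (eLpNorm (⇑f) 1 μ).toReal := by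
    rw [integral_norm_eq_lintegral_enorm (Lp.aestronglyMeasurable f),
      eLpNorm_one_eq_lintegral_enorm]
  rw [h2, Lp.norm_def, mul_comm]
  have hfin : eLpNorm (⇑f) 2 μ ≠ ⊤ := Lp.eLpNorm_ne_top f
  have : eLpNorm (⇑f) 2 μ * (μ univ) ^ ((2:ℝ)⁻¹) ≠ ⊤ :=
    ENNReal.mul_ne_top hfin (by
      exact ENNReal.rpow_ne_top_of_nonneg (by norm_num) (measure_ne_top μ _))
  calc (eLpNorm (⇑f) 1 μ).toReal ≤ (eLpNorm (⇑f) 2 μ * (μ univ) ^ ((2:ℝ)⁻¹)).toReal :=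
        ENNReal.toReal_mono this h1
    _ = (eLpNorm (⇑f) 2 μ).toReal * ((μ univ) ^ ((2:ℝ)⁻¹)).toReal := ENNReal.toReal_mul

lemma continuous_intOn (μ : Measure ℝ) [IsFiniteMeasure μ] [NullSingletonClass μ]
    (f : Lp (EuclideanSpace ℝ ι) 2 μ) :
    Continuous (fun c : ℝ => ∫ s in Iic c, f s ∂μ) := by
  rw [continuous_iff_continuousAt]
  intro c₀
  have heq : ∀ c : ℝ, ∫ s in Iic c, f s ∂μ = ∫ s, (Iic c).indicator (⇑f) s ∂μ := fun c =>
    (integral_indicator measurableSet_Iic).symm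
  unfold ContinuousAt
  simp_rw [heq]
  apply tendsto_integral_filter_of_dominated_convergence (fun s => ‖f s‖)
  · exact Eventually.of_forall fun c => (Lp.aestronglyMeasurable f).indicator measurableSet_Iic
  · exact Eventually.of_forall fun c =>
      Eventually.of_forall fun s => norm_indicator_le_norm_self _ _
  · exact (myIntegrable μ f).norm
  · have hne : ∀ᵐ s ∂μ, s ≠ c₀ := by
      rw [ae_iff]; simpa using measure_singleton c₀
    filter_upwards [hne] with s hs
    rcases lt_or_gt_of_ne hs with h | h
    · have hev : ∀ᶠ c in 𝓝 c₀, (Iic c).indicator (⇑f) s = f s :=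
        (eventually_gt_nhds h).mono fun c hc => indicator_of_mem (show s ∈ Iic c from hc.le) _
      rw [indicator_of_mem (show s ∈ Iic c₀ from h.le)]
      exact tendsto_const_nhds.congr' (hev.mono fun c hc => hc.symm)
    · have hev : ∀ᶠ c in 𝓝 c₀, (Iic c).indicator (⇑f) s = 0 :=
        (eventually_lt_nhds h).mono fun c hc => indicator_of_notMem (show s ∉ Iic c from not_le.2 hc) _
      rw [indicator_of_notMem (show s ∉ Iic c₀ from not_le.2 h)]
      exact tendsto_const_nhds.congr' (hev.mono fun c hc => hc.symm)

lemma continuous_intOn2 (μ : Measure ℝ) [IsFiniteMeasure μ] [NullSingletonClass μ]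
    {X : Type*} [TopologicalSpace X] {c : X → ℝ} {g : X → Lp (EuclideanSpace ℝ ι) 2 μ}
    (hc : Continuous c) (hg : Continuous g) :
    Continuous (fun x : X => ∫ s in Iic (c x), (g x) s ∂μ) := by
  set C := ((μ univ) ^ (2:ℝ)⁻¹).toReal with hC
  rw [continuous_iff_continuousAt]
  intro x₀
  rw [ContinuousAt, tendsto_iff_dist_tendsto_zero]
  have key : ∀ x : X,
      dist (∫ s in Iic (c x), (g x) s ∂μ) (∫ s in Iic (c x₀), (g x₀) s ∂μ)
      ≤ C * dist (g x) (g x₀)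
        + dist (∫ s in Iic (c x), (g x₀) s ∂μ) (∫ s in Iic (c x₀), (g x₀) s ∂μ) := by
    intro x
    set cc := c x
    set f := g x
    set f₀ := g x₀
    have hd : dist (∫ s in Iic cc, f s ∂μ) (∫ s in Iic cc, f₀ s ∂μ) ≤ C * dist f f₀ := by
      rw [dist_eq_norm, ← integral_sub ((myIntegrable μ f).restrict)
        ((myIntegrable μ f₀).restrict)]
      have he : ∫ s in Iic cc, (f s - f₀ s) ∂μ = ∫ s in Iic cc, (f - f₀ : Lp _ 2 μ) s ∂μ := by
        refine integral_congr_ae ?_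
        filter_upwards [ae_restrict_of_ae (Lp.coeFn_sub f f₀)] with s hs
        rw [hs]; rfl
      rw [he]
      calc ‖∫ s in Iic cc, (f - f₀ : Lp _ 2 μ) s ∂μ‖
          ≤ ∫ s in Iic cc, ‖(f - f₀ : Lp _ 2 μ) s‖ ∂μ := norm_integral_le_integral_norm _
        _ ≤ ∫ s, ‖(f - f₀ : Lp _ 2 μ) s‖ ∂μ :=
            setIntegral_le_integral (myIntegrable μ _).norm
              (Eventually.of_forall fun s => norm_nonneg _)
        _ ≤ C * ‖(f - f₀ : Lp _ 2 μ)‖ := integral_norm_le_L2 μ _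
        _ = C * dist f f₀ := by rw [dist_eq_norm]
    calc dist (∫ s in Iic cc, f s ∂μ) (∫ s in Iic (c x₀), f₀ s ∂μ)
        ≤ dist (∫ s in Iic cc, f s ∂μ) (∫ s in Iic cc, f₀ s ∂μ)
          + dist (∫ s in Iic cc, f₀ s ∂μ) (∫ s in Iic (c x₀), f₀ s ∂μ) := dist_triangle _ _ _
      _ ≤ C * dist f f₀ + dist (∫ s in Iic cc, f₀ s ∂μ) (∫ s in Iic (c x₀), f₀ s ∂μ) := by
          gcongr
  have hcont : Continuous (fun x : X =>
      C * dist (g x) (g x₀)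
        + dist (∫ s in Iic (c x), (g x₀) s ∂μ) (∫ s in Iic (c x₀), (g x₀) s ∂μ)) :=
    (continuous_const.mul (hg.dist continuous_const)).add
      (((continuous_intOn μ (g x₀)).comp hc).dist continuous_const)
  have h0 : Tendsto (fun x : X =>
      C * dist (g x) (g x₀)
        + dist (∫ s in Iic (c x), (g x₀) s ∂μ) (∫ s in Iic (c x₀), (g x₀) s ∂μ))
      (𝓝 x₀) (𝓝 0) := by
    have h := hcont.tendsto x₀
    simpa only [dist_self, mul_zero, add_zero] using h
  exact squeeze_zero (fun p => dist_nonneg) key h0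

lemma avg_eq (μ : Measure ℝ) [IsFiniteMeasure μ] (f : Lp (EuclideanSpace ℝ ι) 2 μ)
    {ε t : ℝ} (ht : 0 ≤ t) (hε : 0 < ε) :
    avg μ (⇑f) ε t
      = ε⁻¹ • ((∫ s in Iic t, f s ∂μ) - ∫ s in Iic (max (t - ε) 0), f s ∂μ) := by
  have hle : max (t - ε) 0 ≤ t := max_le (by linarith) ht
  have hsplit : ∫ s in Iic t, f s ∂μ
      = (∫ s in Iic (max (t - ε) 0), f s ∂μ) + ∫ s in Ioc (max (t - ε) 0) t, f s ∂μ := by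
    rw [← setIntegral_union (Iic_disjoint_Ioc le_rfl) measurableSet_Ioc
      ((myIntegrable μ f).integrableOn) ((myIntegrable μ f).integrableOn),
      Iic_union_Ioc_eq_Iic hle]
  rw [avg]
  congr 1
  rw [hsplit]
  abel

lemma basis_nat : (𝓝[>] (0:ℝ)).HasBasis (fun _ : ℕ => True)
    (fun n => Ioo 0 ((n:ℝ)+1)⁻¹) := by
  apply (nhdsGT_basis (0:ℝ)).to_hasBasis
  · intro b hb
    obtain ⟨n, hn⟩ := exists_nat_one_div_lt hb
    exact ⟨n, trivial, Ioo_subset_Ioo le_rfl (by rw [one_div] at hn; exact hn.le)⟩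
  · intro n _
    exact ⟨((n:ℝ)+1)⁻¹, by positivity, subset_rfl⟩

lemma liminf_eq_rat (h : ℝ → EReal) (hc : ContinuousOn h (Ioi 0)) :
    liminf h (𝓝[>] (0:ℝ))
      = ⨆ n : ℕ, ⨅ q : {q : ℚ // 0 < (q:ℝ) ∧ (q:ℝ) < ((n:ℝ)+1)⁻¹}, h q := by
  rw [basis_nat.liminf_eq_iSup_iInf]
  simp only [iSup_true]
  refine iSup_congr fun n => le_antisymm ?_ ?_
  · exact le_iInf fun q => iInf₂_le (q : ℝ) ⟨q.2.1, q.2.2⟩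
  · refine le_iInf₂ fun ε hε => ?_
    obtain ⟨hε0, hεδ⟩ := hε
    have hm : ∀ k : ℕ, ∃ q : ℚ, max (ε - ((k:ℝ)+1)⁻¹) (ε/2) < q ∧ (q:ℝ) < ε := by
      intro k
      apply exists_rat_btwn
      apply max_lt
      · have : (0:ℝ) < ((k:ℝ)+1)⁻¹ := by positivity
        linarith
      · linarith
    choose q hq1 hq2 using hm
    have hq0 : ∀ k, 0 < ((q k : ℚ) : ℝ) := fun k =>
      lt_trans (by positivity) (lt_of_le_of_lt (le_max_right _ _) (hq1 k))
    have hqδ : ∀ k, ((q k : ℚ) : ℝ) < ((n:ℝ)+1)⁻¹ := fun k => (hq2 k).trans hεδ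
    have hlow : Tendsto (fun k : ℕ => max (ε - ((k:ℝ)+1)⁻¹) (ε/2)) atTop (𝓝 ε) := by
      have h1 : Tendsto (fun k : ℕ => ε - ((k:ℝ)+1)⁻¹) atTop (𝓝 (ε - 0)) := by
        apply tendsto_const_nhds.sub
        simpa only [one_div] using tendsto_one_div_add_atTop_nhds_zero_nat (𝕜 := ℝ)
      rw [sub_zero] at h1
      have := h1.max (tendsto_const_nhds (x := ε/2))
      rwa [max_eq_left (by linarith : ε/2 ≤ ε)] at this
    have hqlim : Tendsto (fun k : ℕ => ((q k : ℚ) : ℝ)) atTop (𝓝 ε) :=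
      tendsto_of_tendsto_of_tendsto_of_le_of_le hlow tendsto_const_nhds
        (fun k => (hq1 k).le) (fun k => (hq2 k).le)
    have hca : ContinuousAt h ε := hc.continuousAt (Ioi_mem_nhds hε0)
    have hhlim : Tendsto (fun k : ℕ => h ((q k : ℚ) : ℝ)) atTop (𝓝 (h ε)) :=
      hca.tendsto.comp hqlim
    refine ge_of_tendsto' hhlim fun k => ?_
    exact iInf_le (fun q : {q : ℚ // 0 < (q:ℝ) ∧ (q:ℝ) < ((n:ℝ)+1)⁻¹} => h q)
      ⟨q k, hq0 k, hqδ k⟩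

set_option maxHeartbeats 1000000 in
lemma continuous_avg_q (μ : Measure ℝ) [IsFiniteMeasure μ] [NullSingletonClass μ] (T : ℝ)
    {q : ℝ} (hq : 0 < q) :
    Continuous (fun p : Icc (0:ℝ) T × Lp (EuclideanSpace ℝ ι) 2 μ =>
      avg μ (⇑p.2) q (p.1 : ℝ)) := by
  have heq : ∀ p : Icc (0:ℝ) T × Lp (EuclideanSpace ℝ ι) 2 μ,
      avg μ (⇑p.2) q (p.1 : ℝ) = q⁻¹ • ((∫ s in Iic (p.1:ℝ), p.2 s ∂μ)
        - ∫ s in Iic (max ((p.1:ℝ) - q) 0), p.2 s ∂μ) :=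
    fun p => avg_eq μ p.2 p.1.2.1 hq
  simp_rw [heq]
  apply Continuous.fun_const_smul
  apply Continuous.sub
  · exact continuous_intOn2 μ (continuous_subtype_val.comp continuous_fst) continuous_snd
  · exact continuous_intOn2 μ
      (((continuous_subtype_val.comp continuous_fst).sub continuous_const).max
        continuous_const) continuous_snd

lemma continuousOn_avg (μ : Measure ℝ) [IsFiniteMeasure μ] [NullSingletonClass μ]
    (f : Lp (EuclideanSpace ℝ ι) 2 μ) {t : ℝ} (ht : 0 ≤ t) :
    ContinuousOn (fun ε => avg μ (⇑f) ε t) (Ioi 0) := by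
  have heq : ∀ ε ∈ Ioi (0:ℝ), avg μ (⇑f) ε t
      = ε⁻¹ • ((∫ s in Iic t, f s ∂μ) - ∫ s in Iic (max (t - ε) 0), f s ∂μ) :=
    fun ε hε => avg_eq μ f ht hε
  refine ContinuousOn.congr ?_ heq
  refine ContinuousOn.smul (continuous_id.continuousOn.inv₀ fun ε hε => ne_of_gt hε) ?_
  refine (continuous_const.sub ?_).continuousOn
  exact (continuous_intOn μ f).comp ((continuous_const.sub continuous_id).max continuous_const)

lemma hatComp_eq (μ : Measure ℝ) [IsFiniteMeasure μ] [NullSingletonClass μ]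
    (f : Lp (EuclideanSpace ℝ ι) 2 μ) {t : ℝ} (ht : 0 ≤ t) (i : ι) :
    hatComp μ (⇑f) t i = ⨆ n : ℕ, ⨅ q : {q : ℚ // 0 < (q:ℝ) ∧ (q:ℝ) < ((n:ℝ)+1)⁻¹},
      ((avg μ (⇑f) (q:ℝ) t i : ℝ) : EReal) := by
  apply liminf_eq_rat
  exact continuous_coe_real_ereal.comp_continuousOn
    (((EuclideanSpace.proj i).continuous.comp_continuousOn (continuousOn_avg μ f ht)))

lemma measurable_hatComp (μ : Measure ℝ) [IsFiniteMeasure μ] [NullSingletonClass μ] (T : ℝ) (i : ι) :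
    Measurable (fun p : Icc (0:ℝ) T × Lp (EuclideanSpace ℝ ι) 2 μ =>
      hatComp μ (⇑p.2) (p.1 : ℝ) i) := by
  have heq : ∀ p : Icc (0:ℝ) T × Lp (EuclideanSpace ℝ ι) 2 μ,
      hatComp μ (⇑p.2) (p.1:ℝ) i
      = ⨆ n : ℕ, ⨅ q : {q : ℚ // 0 < (q:ℝ) ∧ (q:ℝ) < ((n:ℝ)+1)⁻¹},
        ((avg μ (⇑p.2) ((q:ℚ):ℝ) (p.1:ℝ) i : ℝ) : EReal) :=
    fun p => hatComp_eq μ p.2 p.1.2.1 i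
  simp_rw [heq]
  apply Measurable.iSup
  intro n
  apply Measurable.iInf
  intro q
  have hcont : Continuous (fun p : Icc (0:ℝ) T × Lp (EuclideanSpace ℝ ι) 2 μ =>
      ((avg μ (⇑p.2) ((q:ℚ):ℝ) (p.1:ℝ) i : ℝ) : EReal)) :=
    continuous_coe_real_ereal.comp
      ((EuclideanSpace.proj (𝕜 := ℝ) i).continuous.comp (continuous_avg_q μ T q.2.1))
  exact hcont.measurable

lemma measurable_precise (μ : Measure ℝ) [IsFiniteMeasure μ] [NullSingletonClass μ] (T : ℝ) :
    Measurable (fun p : Icc (0:ℝ) T × Lp (EuclideanSpace ℝ ι) 2 μ =>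
      precise μ (⇑p.2) (p.1 : ℝ)) := by
  classical
  have hs : MeasurableSet {p : Icc (0:ℝ) T × Lp (EuclideanSpace ℝ ι) 2 μ |
      ∀ i, hatComp μ (⇑p.2) ((p.1:ℝ)) i ≠ ⊤ ∧ hatComp μ (⇑p.2) ((p.1:ℝ)) i ≠ ⊥} := by
    rw [setOf_forall]
    refine MeasurableSet.iInter fun i => ?_
    rw [setOf_and]
    exact (measurable_hatComp μ T i (measurableSet_singleton ⊤).compl).inter
      (measurable_hatComp μ T i (measurableSet_singleton ⊥).compl)
  have hbr : Measurable (fun p : Icc (0:ℝ) T × Lp (EuclideanSpace ℝ ι) 2 μ =>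
      (WithLp.equiv 2 (ι → ℝ)).symm fun i => (hatComp μ (⇑p.2) (p.1:ℝ) i).toReal) := by
    have hmp : Measurable (fun p : Icc (0:ℝ) T × Lp (EuclideanSpace ℝ ι) 2 μ =>
        (fun i => (hatComp μ (⇑p.2) (p.1:ℝ) i).toReal : ι → ℝ)) :=
      measurable_pi_iff.mpr fun i => (measurable_hatComp μ T i).ereal_toReal
    exact (MeasurableEquiv.toLp 2 (ι → ℝ)).measurable.comp hmp
  unfold precise
  exact Measurable.ite hs hbr measurable_const

lemma ae_precise_eq {T : ℝ}
    (f : Lp (EuclideanSpace ℝ ι) 2 (volume.restrict (Icc (0:ℝ) T)))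
    (g : ℝ → EuclideanSpace ℝ ι) (hg : Measurable g)
    (hfg : g =ᵐ[volume.restrict (Icc (0:ℝ) T)] f) :
    ∀ᵐ t ∂(volume.restrict (Icc (0:ℝ) T)),
      precise (volume.restrict (Icc (0:ℝ) T)) (⇑f) t = g t := by
  classical
  haveI : IsFiniteMeasure (volume.restrict (Icc (0:ℝ) T)) := by
    constructor
    rw [Measure.restrict_apply_univ]
    exact measure_Icc_lt_top
  have hgint : Integrable g (volume.restrict (Icc (0:ℝ) T)) :=
    (myIntegrable _ f).congr hfg.symm
  set g' : ℝ → EuclideanSpace ℝ ι := (Icc (0:ℝ) T).indicator g with hg'def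
  have hg'int : Integrable g' volume :=
    (integrable_indicator_iff measurableSet_Icc).mpr hgint
  have hdiff := (IsUnifLocDoublingMeasure.vitaliFamily (volume : Measure ℝ) 1).ae_tendsto_average
    hg'int.locallyIntegrable
  have hne0 : ∀ᵐ t ∂(volume.restrict (Icc (0:ℝ) T)), t ≠ (0:ℝ) := by
    rw [ae_iff]
    have h0 : {t : ℝ | ¬ t ≠ 0} = {0} := by ext t; simp
    rw [h0]
    exact measure_singleton 0
  filter_upwards [ae_restrict_of_ae hdiff, ae_restrict_mem measurableSet_Icc, hne0]
    with t ht htmem htne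
  have ht0 : 0 < t := lt_of_le_of_ne htmem.1 (Ne.symm htne)
  have htT : t ≤ T := htmem.2
  have hIccTendsto : Tendsto (fun ε : ℝ => Icc (t - ε) t) (𝓝[>] 0)
      ((IsUnifLocDoublingMeasure.vitaliFamily (volume : Measure ℝ) 1).filterAt t) := by
    apply (Real.tendsto_Icc_vitaliFamily_left t).comp
    rw [tendsto_nhdsWithin_iff]
    constructor
    · have h2 : Tendsto (fun ε : ℝ => t - ε) (𝓝 0) (𝓝 (t - 0)) :=
        tendsto_const_nhds.sub tendsto_id
      rw [sub_zero] at h2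
      exact h2.mono_left nhdsWithin_le_nhds
    · filter_upwards [self_mem_nhdsWithin] with ε hε
      exact sub_lt_self t hε
  have havg : Tendsto (fun ε : ℝ => ⨍ y in Icc (t - ε) t, g' y ∂volume) (𝓝[>] 0)
      (𝓝 (g' t)) := ht.comp hIccTendsto
  have hev : ∀ᶠ ε in 𝓝[>] (0:ℝ),
      avg (volume.restrict (Icc (0:ℝ) T)) (⇑f) ε t = ⨍ y in Icc (t - ε) t, g' y ∂volume := by
    have h1 : ∀ᶠ ε in 𝓝[>] (0:ℝ), ε < t :=
      eventually_nhdsWithin_of_eventually_nhds (eventually_lt_nhds ht0)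
    filter_upwards [h1, self_mem_nhdsWithin] with ε hεt hε0
    have hε0' : (0:ℝ) < ε := hε0
    have hmax : max (t - ε) 0 = t - ε := max_eq_left (by linarith)
    have hsub : Ioc (t - ε) t ⊆ Icc (0:ℝ) T :=
      fun s hs => ⟨le_trans (by linarith) hs.1.le, le_trans hs.2 htT⟩
    have hres : (volume.restrict (Icc (0:ℝ) T)).restrict (Ioc (t - ε) t)
        = volume.restrict (Ioc (t - ε) t) := by
      rw [Measure.restrict_restrict measurableSet_Ioc, inter_eq_self_of_subset_left hsub]
    have hintf : ∫ s in Ioc (t - ε) t, f s ∂(volume.restrict (Icc (0:ℝ) T))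
        = ∫ s in Ioc (t - ε) t, g' s ∂volume := by
      rw [show ∫ s in Ioc (t - ε) t, f s ∂(volume.restrict (Icc (0:ℝ) T))
        = ∫ s, f s ∂((volume.restrict (Icc (0:ℝ) T)).restrict (Ioc (t - ε) t)) from rfl, hres]
      refine integral_congr_ae ?_
      have hfg' : g =ᵐ[volume.restrict (Ioc (t - ε) t)] f :=
        ae_restrict_of_ae_restrict_of_subset hsub hfg
      filter_upwards [hfg', ae_restrict_mem measurableSet_Ioc] with s hs hsmem
      rw [hg'def, indicator_of_mem (hsub hsmem)]
      exact hs.symm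
    rw [avg, hmax, hintf, setAverage_eq, Real.volume_real_Icc]
    have htt : t - (t - ε) = ε := by ring
    rw [htt, max_eq_left hε0'.le, ← integral_Icc_eq_integral_Ioc]
  have hlim : Tendsto (fun ε : ℝ => avg (volume.restrict (Icc (0:ℝ) T)) (⇑f) ε t) (𝓝[>] 0)
      (𝓝 (g t)) := by
    have hgt : g' t = g t := indicator_of_mem htmem g
    rw [← hgt]
    exact havg.congr' (hev.mono fun ε h => h.symm)
  have hhat : ∀ i : ι, hatComp (volume.restrict (Icc (0:ℝ) T)) (⇑f) t i = ((g t i : ℝ) : EReal) := by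
    intro i
    have hlim_i : Tendsto
        (fun ε : ℝ => ((avg (volume.restrict (Icc (0:ℝ) T)) (⇑f) ε t i : ℝ) : EReal)) (𝓝[>] 0)
        (𝓝 ((g t i : ℝ) : EReal)) :=
      (continuous_coe_real_ereal.tendsto _).comp
        (((EuclideanSpace.proj (𝕜 := ℝ) i).continuous.tendsto _).comp hlim)
    exact hlim_i.liminf_eq
  rw [precise, if_pos]
  · have hfun : (fun i => (hatComp (volume.restrict (Icc (0:ℝ) T)) (⇑f) t i).toReal)
        = fun i => g t i := by
      funext i
      rw [hhat i, EReal.toReal_coe]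
    rw [hfun]
    rfl
  · intro i
    rw [hhat i]
    exact ⟨EReal.coe_ne_top _, EReal.coe_ne_bot _⟩

end AuxStmt1

theorem stmt_1 (T : ℝ) (hT : 0 < T) (m : ℕ) (hm : 0 < m) :
    -- (i) joint Borel measurability on [0,T] × L²
    Measurable
      (fun p : Set.Icc (0:ℝ) T ×
          Lp (EuclideanSpace ℝ (Fin m)) 2 (volume.restrict (Set.Icc (0:ℝ) T)) =>
        Phi T m (p.1 : ℝ) p.2) ∧
    -- (ii) Φ(·, f) agrees Lebesgue-a.e. on [0,T] with every Borel representative of f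
    (∀ (f : Lp (EuclideanSpace ℝ (Fin m)) 2 (volume.restrict (Set.Icc (0:ℝ) T)))
        (g : ℝ → EuclideanSpace ℝ (Fin m)), Measurable g →
        g =ᵐ[volume.restrict (Set.Icc (0:ℝ) T)] f →
        ∀ᵐ t ∂(volume.restrict (Set.Icc (0:ℝ) T)), Phi T m t f = g t) := by
  constructor
  · haveI : IsFiniteMeasure (volume.restrict (Icc (0:ℝ) T)) := by
      constructor
      rw [Measure.restrict_apply_univ]
      exact measure_Icc_lt_top
    exact measurable_precise (volume.restrict (Icc (0:ℝ) T)) T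
  · intro f g hg hfg
    exact ae_precise_eq f g hg hfg
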